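/- The only integer solutions (u,v) with gcd(u,v) = 1 to u^6 + u^3 v^3 + v^6 = 3^k with k ≥ 2 do not exist; that is, if u, v are coprime integers and u^6 + u^3 v^3 + v^6 = 3^k for some integer k ≥ 0, then k ≤ 1. -/
import Mathlib

/-- If `u, v` are coprime integers and `u^6 + u^3 v^3 + v^6 = 3^k` for some `k ≥ 0`,
then `k ≤ 1`. -/
theorem sextic_three_power_bound (u v : ℤ) (h : IsCoprime u v) (k : ℕ)
    (hk : u ^ 6 + u ^ 3 * v ^ 3 + v ^ 6 = 3 ^ k) : k ≤ 1 := by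
  by_contra hlt
  push_neg at hlt
  have h9 : (9 : ℤ) ∣ u ^ 6 + u ^ 3 * v ^ 3 + v ^ 6 := by
    rw [hk]
    calc (9 : ℤ) = 3 ^ 2 := by norm_num
    _ ∣ 3 ^ k := pow_dvd_pow 3 hlt
  have hz : ((u : ZMod 9)) ^ 6 + (u : ZMod 9) ^ 3 * (v : ZMod 9) ^ 3 + (v : ZMod 9) ^ 6 = 0 := by
    have := (ZMod.intCast_zmod_eq_zero_iff_dvd _ 9).mpr h9
    push_cast at this
    exact this
  have key : ∀ a b : ZMod 9, a ^ 6 + a ^ 3 * b ^ 3 + b ^ 6 = 0 → a ^ 3 = 0 ∧ b ^ 3 = 0 := by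
    decide
  obtain ⟨hu, hv⟩ := key _ _ hz
  have hu9 : (9 : ℤ) ∣ u ^ 3 := by
    have : ((u ^ 3 : ℤ) : ZMod 9) = 0 := by push_cast; exact hu
    exact (ZMod.intCast_zmod_eq_zero_iff_dvd _ 9).mp this
  have hv9 : (9 : ℤ) ∣ v ^ 3 := by
    have : ((v ^ 3 : ℤ) : ZMod 9) = 0 := by push_cast; exact hv
    exact (ZMod.intCast_zmod_eq_zero_iff_dvd _ 9).mp this
  have hp : Prime (3 : ℤ) := Int.prime_three
  have h3u : (3 : ℤ) ∣ u := hp.dvd_of_dvd_pow (dvd_trans (by norm_num) hu9)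
  have h3v : (3 : ℤ) ∣ v := hp.dvd_of_dvd_pow (dvd_trans (by norm_num) hv9)
  exact hp.not_unit (h.isUnit_of_dvd' h3u h3v)
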